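/- Exchange formula for countable Markov chains: For an irreducible positive recurrent Markov chain on a countable state space S, for all states a, b, c: E_b[Σ_{n=0}^{𝔱_b−1} 1(X_n = a)]/E_b[𝔱_b] = E_c[Σ_{n=0}^{𝔱_c−1} 1(X_n = a)]/E_c[𝔱_c]. -/

import Mathlib

open scoped ENNReal Classical
noncomputable section

/-- `n`-step transition probabilities of the stochastic matrix `p`. -/
def pPow {S : Type*} (p : S → S → ℝ≥0∞) : ℕ → S → S → ℝ≥0∞
  | 0, i, j => if i = j then 1 else 0
  | n + 1, i, j => ∑' k, pPow p n i k * p k j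

/-- `i` and `j` communicate. -/
def Communicates {S : Type*} (p : S → S → ℝ≥0∞) (i j : S) : Prop :=
  (∃ n, 0 < pPow p n i j) ∧ (∃ n, 0 < pPow p n j i)

/-- `taboo p b n j = P_b(X_n = j, X_1 ≠ b, …, X_n ≠ b) = P_b(X_n = j, 𝔱_b > n)`. -/
def taboo {S : Type*} (p : S → S → ℝ≥0∞) (b : S) : ℕ → S → ℝ≥0∞
  | 0, j => if j = b then 1 else 0
  | n + 1, j => if j = b then 0 else ∑' i, taboo p b n i * p i j

/-- `E_b[Σ_{n=0}^{𝔱_b−1} 1(X_n = a)]`. -/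
def cycNum {S : Type*} (p : S → S → ℝ≥0∞) (b a : S) : ℝ≥0∞ := ∑' n, taboo p b n a

/-- `E_b[𝔱_b] = Σ_n P_b(𝔱_b > n)`. -/
def meanRet {S : Type*} (p : S → S → ℝ≥0∞) (b : S) : ℝ≥0∞ := ∑' n, ∑' j, taboo p b n j

/-- The cycle (occupation) measure `π^{(b)}`. -/
def cyc {S : Type*} (p : S → S → ℝ≥0∞) (b a : S) : ℝ≥0∞ := cycNum p b a / meanRet p b

namespace ExchangeAux

variable {S : Type*}

lemma taboo_zero (p : S → S → ℝ≥0∞) (b j : S) :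
    taboo p b 0 j = if j = b then 1 else 0 := rfl

lemma taboo_succ (p : S → S → ℝ≥0∞) (b : S) (n : ℕ) (j : S) :
    taboo p b (n + 1) j = if j = b then 0 else ∑' i, taboo p b n i * p i j := rfl

lemma cycNum_self (p : S → S → ℝ≥0∞) (b : S) : cycNum p b b = 1 := by
  rw [cycNum, tsum_eq_single 0]
  · simp [taboo_zero]
  · rintro (_ | n) h
    · simp at h
    · simp [taboo_succ]

lemma mass_zero (p : S → S → ℝ≥0∞) (b : S) : ∑' j, taboo p b 0 j = 1 := by
  simp only [taboo_zero]
  exact tsum_ite_eq b 1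

/-- One-step mass identity: `m_{n+1} + f_{n+1} = m_n`. -/
lemma mass_succ (p : S → S → ℝ≥0∞) (hstoch : ∀ i, ∑' j, p i j = 1) (b : S) (n : ℕ) :
    (∑' i, taboo p b n i * p i b) + ∑' j, taboo p b (n + 1) j = ∑' j, taboo p b n j := by
  have h1 : ∑' j, taboo p b n j = ∑' j, ∑' i, taboo p b n i * p i j := by
    rw [ENNReal.tsum_comm]
    simp_rw [ENNReal.tsum_mul_left, hstoch, mul_one]
  have h2 : ∑' j, ∑' i, taboo p b n i * p i j
      = (∑' i, taboo p b n i * p i b)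
        + ∑' j, if j = b then 0 else ∑' i, taboo p b n i * p i j :=
    ENNReal.tsum_eq_add_tsum_ite b
  have h3 : ∑' j, taboo p b (n + 1) j
      = ∑' j, if j = b then 0 else ∑' i, taboo p b n i * p i j := by
    apply tsum_congr
    intro j
    rw [taboo_succ]
  rw [h3, h1, h2]

lemma mass_partial (p : S → S → ℝ≥0∞) (hstoch : ∀ i, ∑' j, p i j = 1) (b : S) (N : ℕ) :
    (∑ n ∈ Finset.range N, ∑' i, taboo p b n i * p i b) + ∑' j, taboo p b N j = 1 := by
  induction N with
  | zero => simpa using mass_zero p b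
  | succ N ih =>
      rw [Finset.sum_range_succ, add_assoc, mass_succ p hstoch b N, ih]

lemma mass_iInf (p : S → S → ℝ≥0∞) (b : S) (hfin : meanRet p b ≠ ⊤) :
    ⨅ n, ∑' j, taboo p b n j = 0 := by
  by_contra h
  have hε : 0 < ⨅ n, ∑' j, taboo p b n j := pos_iff_ne_zero.mpr h
  have : meanRet p b = ⊤ := by
    rw [meanRet, eq_top_iff]
    calc (⊤ : ℝ≥0∞) = ∑' _ : ℕ, ⨅ n, ∑' j, taboo p b n j :=
          (ENNReal.tsum_const_eq_top_of_ne_zero h).symm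
      _ ≤ ∑' n, ∑' j, taboo p b n j := ENNReal.tsum_le_tsum fun n => iInf_le _ n
  exact hfin this

/-- Return probability is one: `Σ_n P_b(𝔱_b = n+1) = 1`. -/
lemma return_sum (p : S → S → ℝ≥0∞) (hstoch : ∀ i, ∑' j, p i j = 1) (b : S)
    (hfin : meanRet p b ≠ ⊤) :
    ∑' n, ∑' i, taboo p b n i * p i b = 1 := by
  apply le_antisymm
  · rw [ENNReal.tsum_eq_iSup_nat]
    apply iSup_le
    intro N
    calc ∑ n ∈ Finset.range N, ∑' i, taboo p b n i * p i b
        ≤ (∑ n ∈ Finset.range N, ∑' i, taboo p b n i * p i b) + ∑' j, taboo p b N j :=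
          le_self_add
      _ = 1 := mass_partial p hstoch b N
  · have h1 : ∀ N, (1 : ℝ≥0∞) ≤ (∑' n, ∑' i, taboo p b n i * p i b) + ∑' j, taboo p b N j := by
      intro N
      rw [← mass_partial p hstoch b N]
      exact add_le_add (ENNReal.sum_le_tsum _) le_rfl
    have h2 : (1 : ℝ≥0∞) ≤ (∑' n, ∑' i, taboo p b n i * p i b) + ⨅ N, ∑' j, taboo p b N j := by
      rw [ENNReal.add_iInf]
      exact le_iInf h1
    rwa [mass_iInf p b hfin, add_zero] at h2

/-- The occupation measure is stationary. -/
lemma cycNum_stat (p : S → S → ℝ≥0∞) (hstoch : ∀ i, ∑' j, p i j = 1) (b : S)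
    (hfin : meanRet p b ≠ ⊤) (a : S) :
    ∑' i, cycNum p b i * p i a = cycNum p b a := by
  have h1 : ∑' i, cycNum p b i * p i a = ∑' n, ∑' i, taboo p b n i * p i a := by
    rw [ENNReal.tsum_comm]
    apply tsum_congr
    intro i
    rw [cycNum, ENNReal.tsum_mul_right]
  rw [h1]
  by_cases h : a = b
  · subst h
    rw [return_sum p hstoch a hfin, cycNum_self]
  · have h2 : ∀ n, ∑' i, taboo p b n i * p i a = taboo p b (n + 1) a := by
      intro n
      rw [taboo_succ, if_neg h]
    simp_rw [h2]
    have h3 : ∑' n, taboo p b n a = taboo p b 0 a + ∑' n, taboo p b (n + 1) a :=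
      tsum_eq_zero_add' ENNReal.summable
    rw [cycNum, h3, taboo_zero, if_neg h, zero_add]

/-- One-step stationarity implies `n`-step stationarity. -/
lemma stat_pow (p : S → S → ℝ≥0∞) (ν : S → ℝ≥0∞)
    (hν : ∀ a, ∑' i, ν i * p i a = ν a) :
    ∀ n a, ∑' i, ν i * pPow p n i a = ν a := by
  intro n
  induction n with
  | zero =>
      intro a
      have : ∀ i, ν i * pPow p 0 i a = if i = a then ν a else 0 := by
        intro i
        show ν i * (if i = a then 1 else 0) = _
        split <;> simp_all
      simp_rw [this]
      exact tsum_ite_eq a (fun _ => ν a)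
  | succ n ih =>
      intro a
      have h1 : ∀ i, ν i * pPow p (n + 1) i a = ∑' k, ν i * pPow p n i k * p k a := by
        intro i
        show ν i * (∑' k, pPow p n i k * p k a) = _
        rw [← ENNReal.tsum_mul_left]
        simp_rw [mul_assoc]
      simp_rw [h1]
      rw [ENNReal.tsum_comm]
      have h2 : ∀ k, ∑' i, ν i * pPow p n i k * p k a = ν k * p k a := by
        intro k
        rw [ENNReal.tsum_mul_right, ih k]
      simp_rw [h2]
      exact hν a

/-- Minimality of the occupation measure among stationary measures. -/
lemma min_stat (p : S → S → ℝ≥0∞) (ν : S → ℝ≥0∞)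
    (hν : ∀ a, ∑' i, ν i * p i a = ν a) (b : S) :
    ∀ a, ν b * cycNum p b a ≤ ν a := by
  have key : ∀ N a, ν b * ∑ n ∈ Finset.range N, taboo p b n a ≤ ν a := by
    intro N
    induction N with
    | zero => simp
    | succ N ih =>
        intro a
        by_cases h : a = b
        · subst h
          have hterm : ∀ n, taboo p a n a = if n = 0 then 1 else 0 := by
            rintro (_ | n) <;> simp [taboo_zero, taboo_succ]
          have : ∑ n ∈ Finset.range (N + 1), taboo p a n a = 1 := by
            simp [hterm]
          rw [this, mul_one]
        · have hshift : ∑ n ∈ Finset.range (N + 1), taboo p b n a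
              = ∑ n ∈ Finset.range N, ∑' i, taboo p b n i * p i a := by
            rw [Finset.sum_range_succ']
            simp only [taboo_zero, if_neg h, add_zero]
            apply Finset.sum_congr rfl
            intro n _
            rw [taboo_succ, if_neg h]
          rw [hshift, ← Summable.tsum_finsetSum (fun n _ => ENNReal.summable)]
          calc ν b * ∑' i, ∑ n ∈ Finset.range N, taboo p b n i * p i a
              = ∑' i, (ν b * ∑ n ∈ Finset.range N, taboo p b n i) * p i a := by
                rw [← ENNReal.tsum_mul_left]
                apply tsum_congr; intro i
                rw [← Finset.sum_mul, mul_assoc]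
            _ ≤ ∑' i, ν i * p i a :=
                ENNReal.tsum_le_tsum fun i => mul_le_mul_left (ih i) _
            _ = ν a := hν a
  intro a
  rw [cycNum, ← ENNReal.tsum_mul_left, ENNReal.tsum_eq_iSup_nat]
  apply iSup_le
  intro N
  calc ∑ n ∈ Finset.range N, ν b * taboo p b n a
      = ν b * ∑ n ∈ Finset.range N, taboo p b n a := by rw [Finset.mul_sum]
    _ ≤ ν a := key N a

lemma meanRet_eq (p : S → S → ℝ≥0∞) (b : S) :
    meanRet p b = ∑' j, cycNum p b j := by
  rw [meanRet, ENNReal.tsum_comm]; rfl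

lemma meanRet_pos (p : S → S → ℝ≥0∞) (b : S) : meanRet p b ≠ 0 := by
  intro h
  have h1 : (1 : ℝ≥0∞) ≤ meanRet p b := by
    rw [meanRet_eq]
    calc (1 : ℝ≥0∞) = cycNum p b b := (cycNum_self p b).symm
      _ ≤ ∑' j, cycNum p b j := ENNReal.le_tsum b
  simp [h] at h1

lemma cycNum_ne_top (p : S → S → ℝ≥0∞) (b : S) (hfin : meanRet p b ≠ ⊤) (a : S) :
    cycNum p b a ≠ ⊤ := by
  have h1 : cycNum p b a ≤ meanRet p b := by
    rw [meanRet_eq]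
    exact ENNReal.le_tsum a
  exact ne_top_of_le_ne_top hfin h1

/-- Key identity: `cycNum p c a = cycNum p c b * cycNum p b a`. -/
lemma key_eq (p : S → S → ℝ≥0∞) (hstoch : ∀ i, ∑' j, p i j = 1)
    (hirr : ∀ i j, Communicates p i j) (hposrec : ∀ b, meanRet p b < ⊤) (b c a : S) :
    cycNum p c a = cycNum p c b * cycNum p b a := by
  set μ : S → ℝ≥0∞ := cycNum p b with hμ
  set ν : S → ℝ≥0∞ := cycNum p c with hν
  have hstatμ : ∀ a, ∑' i, μ i * p i a = μ a :=
    cycNum_stat p hstoch b (hposrec b).ne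
  have hstatν : ∀ a, ∑' i, ν i * p i a = ν a :=
    cycNum_stat p hstoch c (hposrec c).ne
  have hνfin : ∀ i, ν i ≠ ⊤ := cycNum_ne_top p c (hposrec c).ne
  have hμfin : ∀ i, μ i ≠ ⊤ := cycNum_ne_top p b (hposrec b).ne
  have hge : ∀ a, ν b * μ a ≤ ν a := min_stat p ν hstatν b
  set lam : S → ℝ≥0∞ := fun a => ν a - ν b * μ a with hlam
  have hlamstat : ∀ a, ∑' i, lam i * p i a = lam a := by
    intro a
    have hsplit : ∀ i, lam i * p i a + ν b * μ i * p i a = ν i * p i a := by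
      intro i
      rw [← add_mul, hlam]
      congr 1
      exact tsub_add_cancel_of_le (hge i)
    have hadd : (∑' i, lam i * p i a) + ν b * μ a = ν a := by
      have e1 : ν b * μ a = ∑' i, ν b * μ i * p i a := by
        simp_rw [mul_assoc]
        rw [ENNReal.tsum_mul_left, hstatμ a]
      rw [e1, ← ENNReal.tsum_add]
      simp_rw [hsplit]
      exact hstatν a
    have hfin2 : ν b * μ a ≠ ⊤ := ENNReal.mul_ne_top (hνfin b) (hμfin a)
    exact ENNReal.eq_sub_of_add_eq hfin2 hadd
  have hlamb : lam b = 0 := by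
    simp only [hlam]
    rw [hμ, cycNum_self, mul_one, tsub_self]
  have hlamzero : ∀ a, lam a = 0 := by
    intro a
    obtain ⟨⟨n, hn⟩, _⟩ := hirr a b
    have h1 : lam a * pPow p n a b ≤ lam b := by
      rw [← stat_pow p lam hlamstat n b]
      exact ENNReal.le_tsum a
    rw [hlamb, le_zero_iff, mul_eq_zero] at h1
    rcases h1 with h | h
    · exact h
    · exact absurd h hn.ne'
  have heq : ν a = ν b * μ a := by
    have := hlamzero a
    rw [hlam] at this
    have h1 : ν a ≤ ν b * μ a := tsub_eq_zero_iff_le.mp this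
    exact le_antisymm h1 (hge a)
  exact heq

theorem exchange' {S : Type*} (p : S → S → ℝ≥0∞)
    (hstoch : ∀ i, ∑' j, p i j = 1)
    (hirr : ∀ i j, Communicates p i j)
    (hposrec : ∀ b, meanRet p b < ⊤) :
    ∀ a b c, cycNum p b a / meanRet p b = cycNum p c a / meanRet p c := by
  intro a b c
  have heq : ∀ x, cycNum p c x = cycNum p c b * cycNum p b x :=
    fun x => key_eq p hstoch hirr hposrec b c x
  have hM : meanRet p c = cycNum p c b * meanRet p b := by
    rw [meanRet_eq, meanRet_eq, ← ENNReal.tsum_mul_left]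
    exact tsum_congr heq
  have hpos : cycNum p c b ≠ 0 := by
    intro h0
    obtain ⟨⟨n, hn⟩, _⟩ := hirr c b
    have hstatν : ∀ x, ∑' i, cycNum p c i * p i x = cycNum p c x :=
      cycNum_stat p hstoch c (hposrec c).ne
    have h1 : cycNum p c c * pPow p n c b ≤ cycNum p c b := by
      rw [← stat_pow p (cycNum p c) hstatν n b]
      exact ENNReal.le_tsum c
    rw [cycNum_self, one_mul, h0, le_zero_iff] at h1
    exact hn.ne' h1
  have hfin : cycNum p c b ≠ ⊤ := cycNum_ne_top p c (hposrec c).ne b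
  rw [heq a, hM, ENNReal.mul_div_mul_left _ _ hpos hfin]

end ExchangeAux

/-- Exchange formula: for an irreducible positive recurrent countable chain,
`E_b[Σ_{n<𝔱_b} 1(X_n=a)]/E_b[𝔱_b] = E_c[Σ_{n<𝔱_c} 1(X_n=a)]/E_c[𝔱_c]`. -/
theorem exchange_formula {S : Type*} [Countable S] (p : S → S → ℝ≥0∞)
    (hstoch : ∀ i, ∑' j, p i j = 1)
    (hirr : ∀ i j, Communicates p i j)
    (hposrec : ∀ b, meanRet p b < ⊤) :
    ∀ a b c, cycNum p b a / meanRet p b = cycNum p c a / meanRet p c :=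
  ExchangeAux.exchange' p hstoch hirr hposrec
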